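/- Fix n ≥ 1 and let x_k := cos((2k−1)π/(2n)), k = 1, …, n, be the Chebyshev nodes in [−1,1]. Let l_k denote the Lagrange fundamental polynomials for these nodes, i.e. the unique polynomials of degree < n with l_k(x_m) = δ_{km}, let L_n f(x) := ∑_{k=1}^n f(x_k) l_k(x), and let Λ := sup_{x ∈ [−1,1]} ∑_{k=1}^n |l_k(x)| be the Lebesgue constant. Then for all continuous f, g : [−1,1] → ℝ and all x ∈ [−1,1], |L_n(f·g)(x) − L_n f(x)·L_n g(x)| ≤ (1/4)·Λ·(1+Λ)·ω(f;2)·ω(g;2), where ω(f;2) := sup{|f(s) − f(t)| : s, t ∈ [−1,1]}. -/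

import Mathlib

/-- The `k`-th Chebyshev node for `n` nodes: `cos((2k-1)π/(2n))`. -/
noncomputable def chebNode (n k : ℕ) : ℝ :=
  Real.cos ((2 * k - 1) * Real.pi / (2 * n))

/-- Lagrange fundamental polynomial at the Chebyshev nodes (nodes indexed `1, …, n`). -/
noncomputable def lagBasis (n k : ℕ) (t : ℝ) : ℝ :=
  ∏ m ∈ (Finset.Icc 1 n).erase k, (t - chebNode n m) / (chebNode n k - chebNode n m)

/-- The Lagrange interpolation operator at the Chebyshev nodes. -/
noncomputable def lagOp (n : ℕ) (f : ℝ → ℝ) (t : ℝ) : ℝ :=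
  ∑ k ∈ Finset.Icc 1 n, f (chebNode n k) * lagBasis n k t

/-- The Lebesgue constant `‖L_n‖ = sup_{x ∈ [-1,1]} ∑ |l_k(x)|`. -/
noncomputable def lebesgueConst (n : ℕ) : ℝ :=
  sSup {s : ℝ | ∃ t ∈ Set.Icc (-1:ℝ) 1, s = ∑ k ∈ Finset.Icc 1 n, |lagBasis n k t|}

lemma theta_mem (n k : ℕ) (hn : 1 ≤ n) (hk1 : 1 ≤ k) (hk2 : k ≤ n) :
    ((2 * k - 1) * Real.pi / (2 * n) : ℝ) ∈ Set.Icc 0 Real.pi := by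
  have hπ := Real.pi_pos
  have hk1' : (1:ℝ) ≤ (k:ℝ) := by exact_mod_cast hk1
  have hk2' : (k:ℝ) ≤ (n:ℝ) := by exact_mod_cast hk2
  have hn' : (1:ℝ) ≤ (n:ℝ) := by exact_mod_cast hn
  constructor
  · apply div_nonneg (by nlinarith) (by linarith)
  · rw [div_le_iff₀ (by linarith)]
    nlinarith

lemma chebNode_injOn (n : ℕ) (hn : 1 ≤ n) :
    Set.InjOn (chebNode n) ((Finset.Icc 1 n : Finset ℕ) : Set ℕ) := by
  intro k hk m hm h
  simp only [Finset.coe_Icc, Set.mem_Icc] at hk hm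
  have h1 := theta_mem n k hn hk.1 hk.2
  have h2 := theta_mem n m hn hm.1 hm.2
  have heq := Real.injOn_cos h1 h2 h
  have hπ := Real.pi_pos
  have hn' : (1:ℝ) ≤ (n:ℝ) := by exact_mod_cast hn
  rw [mul_div_assoc, mul_div_assoc] at heq
  have hne : Real.pi / (2 * (n:ℝ)) ≠ 0 := by positivity
  have := mul_right_cancel₀ hne heq
  have : (k:ℝ) = (m:ℝ) := by linarith
  exact_mod_cast this

lemma sum_lagBasis (n : ℕ) (hn : 1 ≤ n) (t : ℝ) :
    ∑ k ∈ Finset.Icc 1 n, lagBasis n k t = 1 := by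
  have hinj := chebNode_injOn n hn
  have hne : (Finset.Icc 1 n).Nonempty := ⟨1, by simp [hn]⟩
  have hsum := Lagrange.sum_basis hinj hne
  have h := congrArg (Polynomial.eval t) hsum
  rw [Polynomial.eval_finset_sum, Polynomial.eval_one] at h
  rw [← h]
  refine Finset.sum_congr rfl fun k hk => ?_
  unfold lagBasis Lagrange.basis
  rw [Polynomial.eval_prod]
  refine Finset.prod_congr rfl fun m hm => ?_
  simp [Lagrange.basisDivisor, div_eq_inv_mul]

lemma lagBasis_continuous (n k : ℕ) : Continuous (lagBasis n k) := by
  unfold lagBasis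
  apply continuous_finset_prod
  intro m _
  exact (continuous_id.sub continuous_const).div_const _

lemma lebesgueFun_le (n : ℕ) (x : ℝ) (hx : x ∈ Set.Icc (-1:ℝ) 1) :
    ∑ k ∈ Finset.Icc 1 n, |lagBasis n k x| ≤ lebesgueConst n := by
  have hFc : Continuous (fun t => ∑ k ∈ Finset.Icc 1 n, |lagBasis n k t|) :=
    continuous_finset_sum _ fun k _ => (lagBasis_continuous n k).abs
  have hset : {s : ℝ | ∃ t ∈ Set.Icc (-1:ℝ) 1, s = ∑ k ∈ Finset.Icc 1 n, |lagBasis n k t|}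
      = (fun t => ∑ k ∈ Finset.Icc 1 n, |lagBasis n k t|) '' Set.Icc (-1) 1 := by
    ext s; simp [Set.mem_image, eq_comm]
  unfold lebesgueConst
  apply le_csSup
  · rw [hset]; exact (isCompact_Icc.image hFc).bddAbove
  · exact ⟨x, hx, rfl⟩

lemma lebesgueConst_nonneg (n : ℕ) : 0 ≤ lebesgueConst n := by
  refine le_trans ?_ (lebesgueFun_le n 0 (by norm_num))
  exact Finset.sum_nonneg fun k _ => abs_nonneg _

lemma abs_lagOp_le (n : ℕ) (hn : 1 ≤ n) (h : ℝ → ℝ) (M x : ℝ)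
    (hM : ∀ k ∈ Finset.Icc 1 n, |h (chebNode n k)| ≤ M) (hx : x ∈ Set.Icc (-1:ℝ) 1) :
    |lagOp n h x| ≤ lebesgueConst n * M := by
  have hM0 : 0 ≤ M := le_trans (abs_nonneg _) (hM 1 (by simp [hn]))
  calc |lagOp n h x| ≤ ∑ k ∈ Finset.Icc 1 n, |h (chebNode n k) * lagBasis n k x| :=
        Finset.abs_sum_le_sum_abs _ _
    _ ≤ ∑ k ∈ Finset.Icc 1 n, M * |lagBasis n k x| := by
        refine Finset.sum_le_sum fun k hk => ?_
        rw [abs_mul]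
        exact mul_le_mul_of_nonneg_right (hM k hk) (abs_nonneg _)
    _ = M * ∑ k ∈ Finset.Icc 1 n, |lagBasis n k x| := by rw [Finset.mul_sum]
    _ ≤ M * lebesgueConst n := mul_le_mul_of_nonneg_left (lebesgueFun_le n x hx) hM0
    _ = lebesgueConst n * M := mul_comm _ _

lemma chebNode_mem (n k : ℕ) : chebNode n k ∈ Set.Icc (-1:ℝ) 1 :=
  ⟨Real.neg_one_le_cos _, Real.cos_le_one _⟩

/-- Chebyshev-Grüss-type inequality for Lagrange interpolation at Chebyshev nodes, in terms
of the Lebesgue constant `Λ` and the total oscillations `ω(f;2)`, `ω(g;2)` on `[-1,1]`. -/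
theorem lagrange_chebyshev_gruss (n : ℕ) (hn : 1 ≤ n)
    (f g : ℝ → ℝ)
    (hf : ContinuousOn f (Set.Icc (-1:ℝ) 1)) (hg : ContinuousOn g (Set.Icc (-1:ℝ) 1))
    (x : ℝ) (hx : x ∈ Set.Icc (-1:ℝ) 1) :
    |lagOp n (fun t => f t * g t) x - lagOp n f x * lagOp n g x| ≤
      (1 / 4) * lebesgueConst n * (1 + lebesgueConst n) *
        sSup {d : ℝ | ∃ s ∈ Set.Icc (-1:ℝ) 1, ∃ t ∈ Set.Icc (-1:ℝ) 1, d = |f s - f t|} *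
        sSup {d : ℝ | ∃ s ∈ Set.Icc (-1:ℝ) 1, ∃ t ∈ Set.Icc (-1:ℝ) 1, d = |g s - g t|} := by
  set Λ := lebesgueConst n with hΛdef
  set ωf := sSup {d : ℝ | ∃ s ∈ Set.Icc (-1:ℝ) 1, ∃ t ∈ Set.Icc (-1:ℝ) 1, d = |f s - f t|}
    with hωfdef
  set ωg := sSup {d : ℝ | ∃ s ∈ Set.Icc (-1:ℝ) 1, ∃ t ∈ Set.Icc (-1:ℝ) 1, d = |g s - g t|}
    with hωgdef
  have hΛ0 : 0 ≤ Λ := lebesgueConst_nonneg n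
  -- boundedness of the oscillation sets
  obtain ⟨Cf, hCf⟩ := isCompact_Icc.exists_bound_of_continuousOn hf
  obtain ⟨Cg, hCg⟩ := isCompact_Icc.exists_bound_of_continuousOn hg
  have hbf : BddAbove {d : ℝ | ∃ s ∈ Set.Icc (-1:ℝ) 1, ∃ t ∈ Set.Icc (-1:ℝ) 1, d = |f s - f t|} := by
    refine ⟨2 * Cf, ?_⟩
    rintro d ⟨s, hs, t, ht, rfl⟩
    have h1 := hCf s hs; have h2 := hCf t ht
    rw [Real.norm_eq_abs] at h1 h2
    calc |f s - f t| ≤ |f s| + |f t| := abs_sub _ _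
      _ ≤ 2 * Cf := by linarith
  have hbg : BddAbove {d : ℝ | ∃ s ∈ Set.Icc (-1:ℝ) 1, ∃ t ∈ Set.Icc (-1:ℝ) 1, d = |g s - g t|} := by
    refine ⟨2 * Cg, ?_⟩
    rintro d ⟨s, hs, t, ht, rfl⟩
    have h1 := hCg s hs; have h2 := hCg t ht
    rw [Real.norm_eq_abs] at h1 h2
    calc |g s - g t| ≤ |g s| + |g t| := abs_sub _ _
      _ ≤ 2 * Cg := by linarith
  have hωf0 : 0 ≤ ωf := le_csSup hbf ⟨x, hx, x, hx, by simp⟩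
  have hωg0 : 0 ≤ ωg := le_csSup hbg ⟨x, hx, x, hx, by simp⟩
  -- max/min of f, g over the nodes
  have hne : (Finset.Icc 1 n).Nonempty := ⟨1, by simp [hn]⟩
  obtain ⟨ka, hka, hka2⟩ := Finset.exists_max_image (Finset.Icc 1 n)
    (fun k => f (chebNode n k)) hne
  obtain ⟨kb, hkb, hkb2⟩ := Finset.exists_min_image (Finset.Icc 1 n)
    (fun k => f (chebNode n k)) hne
  obtain ⟨la, hla, hla2⟩ := Finset.exists_max_image (Finset.Icc 1 n)
    (fun k => g (chebNode n k)) hne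
  obtain ⟨lb, hlb, hlb2⟩ := Finset.exists_min_image (Finset.Icc 1 n)
    (fun k => g (chebNode n k)) hne
  set c := (f (chebNode n ka) + f (chebNode n kb)) / 2 with hc
  set d := (g (chebNode n la) + g (chebNode n lb)) / 2 with hd
  have hfosc : f (chebNode n ka) - f (chebNode n kb) ≤ ωf := by
    refine le_trans (le_abs_self _) (le_csSup hbf ?_)
    exact ⟨chebNode n ka, chebNode_mem n ka, chebNode n kb, chebNode_mem n kb, rfl⟩
  have hgosc : g (chebNode n la) - g (chebNode n lb) ≤ ωg := by
    refine le_trans (le_abs_self _) (le_csSup hbg ?_)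
    exact ⟨chebNode n la, chebNode_mem n la, chebNode n lb, chebNode_mem n lb, rfl⟩
  have hfc : ∀ k ∈ Finset.Icc 1 n, |f (chebNode n k) - c| ≤ ωf / 2 := by
    intro k hk
    have h1 := hka2 k hk
    have h2 := hkb2 k hk
    rw [abs_le]; constructor <;> (rw [hc]; linarith)
  have hgd : ∀ k ∈ Finset.Icc 1 n, |g (chebNode n k) - d| ≤ ωg / 2 := by
    intro k hk
    have h1 := hla2 k hk
    have h2 := hlb2 k hk
    rw [abs_le]; constructor <;> (rw [hd]; linarith)
  have hsum : ∑ k ∈ Finset.Icc 1 n, lagBasis n k x = 1 := sum_lagBasis n hn x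
  -- the shift identity
  have h1 : lagOp n (fun t => f t - c) x = lagOp n f x - c := by
    simp only [lagOp, sub_mul, Finset.sum_sub_distrib, ← Finset.mul_sum, hsum, mul_one]
  have h2 : lagOp n (fun t => g t - d) x = lagOp n g x - d := by
    simp only [lagOp, sub_mul, Finset.sum_sub_distrib, ← Finset.mul_sum, hsum, mul_one]
  have h3 : lagOp n (fun t => (f t - c) * (g t - d)) x
      = lagOp n (fun t => f t * g t) x - c * lagOp n g x - d * lagOp n f x + c * d := by
    have hterm : ∀ k ∈ Finset.Icc 1 n,
        (f (chebNode n k) - c) * (g (chebNode n k) - d) * lagBasis n k x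
        = f (chebNode n k) * g (chebNode n k) * lagBasis n k x
          - c * (g (chebNode n k) * lagBasis n k x)
          - d * (f (chebNode n k) * lagBasis n k x)
          + c * d * lagBasis n k x := fun k _ => by ring
    rw [lagOp, Finset.sum_congr rfl hterm]
    rw [Finset.sum_add_distrib, Finset.sum_sub_distrib, Finset.sum_sub_distrib,
      ← Finset.mul_sum, ← Finset.mul_sum, ← Finset.mul_sum, hsum, mul_one]
    rfl
  have key : lagOp n (fun t => f t * g t) x - lagOp n f x * lagOp n g x
      = lagOp n (fun t => (f t - c) * (g t - d)) x
        - lagOp n (fun t => f t - c) x * lagOp n (fun t => g t - d) x := by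
    rw [h1, h2, h3]; ring
  -- bounds
  have b1 : |lagOp n (fun t => (f t - c) * (g t - d)) x| ≤ Λ * (ωf / 2 * (ωg / 2)) := by
    refine abs_lagOp_le n hn _ _ x (fun k hk => ?_) hx
    rw [abs_mul]
    exact mul_le_mul (hfc k hk) (hgd k hk) (abs_nonneg _) (by linarith)
  have b2 : |lagOp n (fun t => f t - c) x| ≤ Λ * (ωf / 2) :=
    abs_lagOp_le n hn _ _ x hfc hx
  have b3 : |lagOp n (fun t => g t - d) x| ≤ Λ * (ωg / 2) :=
    abs_lagOp_le n hn _ _ x hgd hx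
  rw [key]
  calc |lagOp n (fun t => (f t - c) * (g t - d)) x
        - lagOp n (fun t => f t - c) x * lagOp n (fun t => g t - d) x|
      ≤ |lagOp n (fun t => (f t - c) * (g t - d)) x|
        + |lagOp n (fun t => f t - c) x * lagOp n (fun t => g t - d) x| := abs_sub _ _
    _ ≤ Λ * (ωf / 2 * (ωg / 2)) + Λ * (ωf / 2) * (Λ * (ωg / 2)) := by
        refine add_le_add b1 ?_
        rw [abs_mul]
        exact mul_le_mul b2 b3 (abs_nonneg _) (by positivity)
    _ = 1 / 4 * Λ * (1 + Λ) * ωf * ωg := by ring
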